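/- Let α, β ∈ ℕ and n ≥ 1. Define R_n^{α,β}(x) = r_n^{α,β}(x-1)P_{n-1}^{α+2,β}(x) with r_n^{α,β} = (α+β+2)_n (α+2)_{n-1} / (2·n!·(β+1)_{n-1}). Then the operator L of order 2α+4, defined by Ly(x) = ((x-1)/(x+1)^β) D_x^{α+2}{(x+1)^{α+β+2} D_x^{α+2}[(x-1)^{α+1} y(x)]}, satisfies L R_n^{α,β}(x) = (n)_{α+2}(n+β)_{α+2} R_n^{α,β}(x). -/

import Mathlib

/-- Pochhammer symbol `(a)_k` for real `a`. -/
noncomputable def poch (a : ℝ) (k : ℕ) : ℝ := (ascPochhammer ℝ k).eval a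

/-- The Jacobi polynomial
`P_n^{α,β}(x) = ((α+1)_n / n!) ⬝ ₂F₁(-n, n+α+β+1; α+1; (1-x)/2)`,
written as the terminating hypergeometric sum. -/
noncomputable def jacobiP (n : ℕ) (a b x : ℝ) : ℝ :=
  (poch (a + 1) n / (Nat.factorial n : ℝ)) *
    ∑ k ∈ Finset.range (n + 1),
      (poch (-(n : ℝ)) k * poch ((n : ℝ) + a + b + 1) k) /
        (poch (a + 1) k * (Nat.factorial k : ℝ)) * ((1 - x) / 2) ^ k

lemma poch_zero (a : ℝ) : poch a 0 = 1 := by simp [poch]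

lemma poch_succ (a : ℝ) (k : ℕ) : poch a (k+1) = poch a k * (a + k) := by
  simp [poch, ascPochhammer_succ_eval]

lemma poch_shift (a : ℝ) (k : ℕ) : poch a k * (a + k) = a * poch (a+1) k := by
  induction k with
  | zero => simp [poch_zero]
  | succ k ih =>
    rw [poch_succ, poch_succ]
    push_cast
    linear_combination (a + (k:ℝ) + 1) * ih

lemma poch_pos {a : ℝ} (h : 0 < a) (k : ℕ) : 0 < poch a k := ascPochhammer_pos k a h

lemma poch_ne {a : ℝ} (h : 0 < a) (k : ℕ) : poch a k ≠ 0 := (poch_pos h k).ne'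

lemma lemA (m p b : ℕ) (x : ℝ) :
    HasDerivAt (fun y => (y-1)^(p+1) * jacobiP m ((p:ℝ)+1) (b:ℝ) y)
      (((m:ℝ)+(p:ℝ)+1) * ((x-1)^p * jacobiP m (p:ℝ) ((b:ℝ)+1) x)) x := by
  set C : ℕ → ℝ := fun k => (poch ((p:ℝ)+1+1) m / (Nat.factorial m : ℝ)) *
      ((poch (-(m:ℝ)) k * poch ((m:ℝ)+((p:ℝ)+1)+(b:ℝ)+1) k) /
        (poch ((p:ℝ)+1+1) k * (Nat.factorial k : ℝ)) * ((-1/2:ℝ))^k) with hC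
  have hF : (fun y => (y-1)^(p+1) * jacobiP m ((p:ℝ)+1) (b:ℝ) y)
      = fun y => ∑ k ∈ Finset.range (m+1), C k * (y-1)^(p+1+k) := by
    funext y
    simp only [jacobiP, hC]
    rw [show ((1:ℝ)-y)/2 = (-1/2)*(y-1) by ring]
    rw [Finset.mul_sum, Finset.mul_sum]
    refine Finset.sum_congr rfl fun k _ => ?_
    rw [mul_pow, pow_add]
    ring
  rw [hF]
  have hsum : HasDerivAt (fun y => ∑ k ∈ Finset.range (m+1), C k * (y-1)^(p+1+k))
      (∑ k ∈ Finset.range (m+1), C k * ((p+1+k : ℕ) * (x-1)^(p+k))) x := by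
    refine HasDerivAt.fun_sum fun k _ => ?_
    have h := (((hasDerivAt_id x).sub_const 1).pow (p+1+k)).const_mul (C k)
    simpa [mul_one, Nat.add_sub_cancel, show p+1+k-1 = p+k by omega] using h
  convert hsum using 1
  rw [jacobiP, show ((1:ℝ)-x)/2 = (-1/2)*(x-1) by ring, Finset.mul_sum, Finset.mul_sum,
    Finset.mul_sum]
  refine Finset.sum_congr rfl fun k hk => ?_
  simp only [hC, mul_pow, pow_add]
  rw [show ((m:ℝ) + ↑p + (↑b + 1) + 1) = (↑m + (↑p + 1) + ↑b + 1) by ring,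
    show ((p:ℝ) + 1 + 1) = (p:ℝ) + 2 by ring]
  have hsk := poch_shift ((p:ℝ)+1) k
  have hsm := poch_shift ((p:ℝ)+1) m
  rw [show ((p:ℝ)+1+1) = (p:ℝ)+2 by ring] at hsk hsm
  have hkey : poch ((p:ℝ)+2) m * (((p:ℝ)+1) + k) * poch ((p:ℝ)+1) k
      = ((m:ℝ) + p + 1) * poch ((p:ℝ)+1) m * poch ((p:ℝ)+2) k := by
    linear_combination poch ((p:ℝ)+2) m * hsk - poch ((p:ℝ)+2) k * hsm
  have h1 : poch ((p:ℝ)+1) k ≠ 0 := poch_ne (by positivity) k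
  have h2 : poch ((p:ℝ)+2) k ≠ 0 := poch_ne (by positivity) k
  have h3 : ((Nat.factorial k : ℝ)) ≠ 0 := Nat.cast_ne_zero.mpr (Nat.factorial_ne_zero k)
  have h4 : ((Nat.factorial m : ℝ)) ≠ 0 := Nat.cast_ne_zero.mpr (Nat.factorial_ne_zero m)
  push_cast
  field_simp
  linear_combination (-(poch (-(m:ℝ)) k * poch ((m:ℝ)+((p:ℝ)+1)+(b:ℝ)+1) k
    * (x-1)^p * (x-1)^k)) * hkey

lemma poch_neg_nat (m : ℕ) : poch (-(m:ℝ)) (m+1) = 0 := by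
  rw [poch_succ]; simp

lemma lemB (m a q : ℕ) (x : ℝ) :
    HasDerivAt (fun y => (y+1)^(q+1) * jacobiP m (a:ℝ) ((q:ℝ)+1) y)
      (((m:ℝ)+(q:ℝ)+1) * ((x+1)^q * jacobiP m ((a:ℝ)+1) (q:ℝ) x)) x := by
  set u : ℝ := (1-x)/2 with hu
  set T : ℕ → ℝ := fun k => (poch ((a:ℝ)+1) m / (Nat.factorial m : ℝ)) *
      (poch (-(m:ℝ)) k * poch ((m:ℝ)+(a:ℝ)+((q:ℝ)+1)+1) k /
        (poch ((a:ℝ)+1) k * (Nat.factorial k : ℝ))) with hT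
  have hJ : ∀ y : ℝ, jacobiP m (a:ℝ) ((q:ℝ)+1) y
      = ∑ k ∈ Finset.range (m+1), T k * ((1-y)/2)^k := by
    intro y
    simp only [jacobiP, hT]
    rw [Finset.mul_sum]
    exact Finset.sum_congr rfl fun k _ => by ring
  have hP : HasDerivAt (fun y => jacobiP m (a:ℝ) ((q:ℝ)+1) y)
      (∑ k ∈ Finset.range (m+1), T k * ((k:ℝ) * u^(k-1) * (-(1/2)))) x := by
    rw [show (fun y => jacobiP m (a:ℝ) ((q:ℝ)+1) y)
        = fun y => ∑ k ∈ Finset.range (m+1), T k * ((1-y)/2)^k from funext hJ]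
    refine HasDerivAt.fun_sum fun k _ => ?_
    have h := ((((hasDerivAt_id x).const_sub 1).div_const 2).fun_pow k).const_mul (T k)
    simp only [id_eq] at h
    convert h using 1
    · rfl
    rw [hu]; ring
  have hprod := (((hasDerivAt_id x).add_const 1).pow (q+1)).mul hP
  simp only [Nat.add_sub_cancel, id_eq, mul_one] at hprod
  suffices heq : (↑(q+1) * (x+1)^q) * jacobiP m (a:ℝ) ((q:ℝ)+1) x +
      (x+1)^(q+1) * (∑ k ∈ Finset.range (m+1), T k * ((k:ℝ) * u^(k-1) * (-(1/2))))
      = ((m:ℝ)+(q:ℝ)+1) * ((x+1)^q * jacobiP m ((a:ℝ)+1) (q:ℝ) x) by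
    rw [← heq]; exact hprod
  set T' : ℕ → ℝ := fun k => (poch ((a:ℝ)+1+1) m / (Nat.factorial m : ℝ)) *
      (poch (-(m:ℝ)) k * poch ((m:ℝ)+((a:ℝ)+1)+(q:ℝ)+1) k /
        (poch ((a:ℝ)+1+1) k * (Nat.factorial k : ℝ))) with hT'
  have hJ' : ∀ y : ℝ, jacobiP m ((a:ℝ)+1) (q:ℝ) y
      = ∑ k ∈ Finset.range (m+1), T' k * ((1-y)/2)^k := by
    intro y
    simp only [jacobiP, hT']
    rw [Finset.mul_sum]
    exact Finset.sum_congr rfl fun k _ => by ring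
  have hcore : ((q:ℝ)+1) * (∑ k ∈ Finset.range (m+1), T k * u^k)
      + (x+1) * (∑ k ∈ Finset.range (m+1), T k * ((k:ℝ) * u^(k-1) * (-(1/2))))
      = ((m:ℝ)+(q:ℝ)+1) * (∑ k ∈ Finset.range (m+1), T' k * u^k) := by
    have hTm1 : T (m+1) = 0 := by simp [hT, poch_neg_nat]
    have hshift : ∑ k ∈ Finset.range (m+1), (k:ℝ) * T k * u^(k-1)
        = ∑ k ∈ Finset.range (m+1), ((k:ℝ)+1) * T (k+1) * u^k := by
      rw [Finset.sum_range_succ' (fun k => (k:ℝ) * T k * u^(k-1)) m, Finset.sum_range_succ]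
      simp [hTm1]
    have hterm : ∀ k : ℕ, (x+1) * (T k * ((k:ℝ) * u^(k-1) * (-(1/2))))
        = (k:ℝ) * T k * u^k - (k:ℝ) * T k * u^(k-1) := by
      intro k
      have hx1 : (x+1) * (-(1/2):ℝ) = u - 1 := by rw [hu]; ring
      have hp : (k:ℝ) * (u^(k-1) * u) = (k:ℝ) * u^k := by
        cases k with
        | zero => simp
        | succ k => rw [Nat.add_sub_cancel, ← pow_succ]
      linear_combination (T k * (k:ℝ) * u^(k-1)) * hx1 + T k * hp
    rw [Finset.mul_sum, Finset.mul_sum, Finset.mul_sum]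
    calc (∑ k ∈ Finset.range (m+1), ((q:ℝ)+1) * (T k * u^k))
          + ∑ k ∈ Finset.range (m+1), (x+1) * (T k * ((k:ℝ) * u^(k-1) * (-(1/2))))
        = (∑ k ∈ Finset.range (m+1), ((q:ℝ)+1) * (T k * u^k))
          + ((∑ k ∈ Finset.range (m+1), (k:ℝ) * T k * u^k)
             - ∑ k ∈ Finset.range (m+1), (k:ℝ) * T k * u^(k-1)) := by
          rw [← Finset.sum_sub_distrib]
          exact congrArg _ (Finset.sum_congr rfl fun k _ => hterm k)
      _ = ∑ k ∈ Finset.range (m+1), (((q:ℝ)+1) * (T k * u^k)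
             + ((k:ℝ) * T k * u^k - ((k:ℝ)+1) * T (k+1) * u^k)) := by
          rw [hshift, ← Finset.sum_sub_distrib, ← Finset.sum_add_distrib]
      _ = ∑ k ∈ Finset.range (m+1), ((m:ℝ)+(q:ℝ)+1) * (T' k * u^k) := by
          refine Finset.sum_congr rfl fun k _ => ?_
          have hsk := poch_shift ((a:ℝ)+1) k
          have hsm := poch_shift ((a:ℝ)+1) m
          rw [show ((a:ℝ)+1+1) = (a:ℝ)+2 by ring] at hsk hsm
          have ha1 : ((a:ℝ)+1) ≠ 0 := by positivity
          have h1 : poch ((a:ℝ)+1) k ≠ 0 := poch_ne (by positivity) k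
          have e2k : poch ((a:ℝ)+2) k = poch ((a:ℝ)+1) k * ((a:ℝ)+1+(k:ℝ)) / ((a:ℝ)+1) := by
            field_simp
            linear_combination -hsk
          have e2m : poch ((a:ℝ)+2) m = poch ((a:ℝ)+1) m * ((a:ℝ)+1+(m:ℝ)) / ((a:ℝ)+1) := by
            field_simp
            linear_combination -hsm
          simp only [hT, hT', poch_succ, Nat.factorial_succ]
          rw [show ((m:ℝ)+((a:ℝ)+1)+(q:ℝ)+1) = (m:ℝ)+(a:ℝ)+((q:ℝ)+1)+1 by ring,
            show ((a:ℝ)+1+1) = (a:ℝ)+2 by ring, e2k, e2m]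
          have h3 : ((Nat.factorial k : ℝ)) ≠ 0 := Nat.cast_ne_zero.mpr (Nat.factorial_ne_zero k)
          have h4 : ((Nat.factorial m : ℝ)) ≠ 0 := Nat.cast_ne_zero.mpr (Nat.factorial_ne_zero m)
          have h5 : ((a:ℝ)+1+(k:ℝ)) ≠ 0 := by positivity
          have h6 : ((k:ℝ)+1) ≠ 0 := by positivity
          push_cast
          field_simp
          ring
  rw [hJ x, hJ' x, show ((1:ℝ)-x)/2 = u from hu.symm]
  push_cast
  linear_combination ((x:ℝ)+1)^q * hcore

lemma iter_deriv_const_mul (c : ℝ) : ∀ (j : ℕ) (f : ℝ → ℝ),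
    deriv^[j] (fun x => c * f x) = fun x => c * deriv^[j] f x := by
  intro j
  induction j with
  | zero => intro f; rfl
  | succ j ih =>
    intro f
    rw [Function.iterate_succ_apply, Function.iterate_succ_apply, deriv_const_mul_field' c, ih]

lemma iterA (m i : ℕ) : ∀ (j b : ℕ),
    deriv^[j] (fun x => (x-1)^(i+j) * jacobiP m (↑(i+j)) (b:ℝ) x)
    = fun x => poch ((m:ℝ)+(i:ℝ)+1) j * ((x-1)^i * jacobiP m (i:ℝ) (↑(b+j)) x) := by
  intro j
  induction j with
  | zero =>
    intro b
    funext x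
    simp [poch_zero]
  | succ j ih =>
    intro b
    rw [Function.iterate_succ_apply]
    have hd : deriv (fun x => (x-1)^(i+(j+1)) * jacobiP m (↑(i+(j+1))) (b:ℝ) x)
        = fun x => ((m:ℝ)+(↑(i+j):ℝ)+1) *
            ((x-1)^(i+j) * jacobiP m (↑(i+j)) ((b:ℝ)+1) x) := by
      funext y
      have h := lemA m (i+j) b y
      rw [show i+(j+1) = (i+j)+1 by omega, show ((↑(i+j+1):ℝ)) = (↑(i+j):ℝ)+1 by push_cast; ring]
      exact h.deriv
    rw [hd, iter_deriv_const_mul, show ((b:ℝ)+1) = ((↑(b+1):ℝ)) by push_cast; ring, ih (b+1),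
      show b+1+j = b+(j+1) by omega]
    funext x
    rw [poch_succ]
    push_cast
    ring

lemma iterB (m q : ℕ) : ∀ (j a : ℕ),
    deriv^[j] (fun x => (x+1)^(q+j) * jacobiP m (a:ℝ) (↑(q+j)) x)
    = fun x => poch ((m:ℝ)+(q:ℝ)+1) j * ((x+1)^q * jacobiP m (↑(a+j)) (q:ℝ) x) := by
  intro j
  induction j with
  | zero =>
    intro a
    funext x
    simp [poch_zero]
  | succ j ih =>
    intro a
    rw [Function.iterate_succ_apply]
    have hd : deriv (fun x => (x+1)^(q+(j+1)) * jacobiP m (a:ℝ) (↑(q+(j+1))) x)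
        = fun x => ((m:ℝ)+(↑(q+j):ℝ)+1) *
            ((x+1)^(q+j) * jacobiP m ((a:ℝ)+1) (↑(q+j)) x) := by
      funext y
      have h := lemB m a (q+j) y
      rw [show q+(j+1) = (q+j)+1 by omega, show ((↑(q+j+1):ℝ)) = (↑(q+j):ℝ)+1 by push_cast; ring]
      exact h.deriv
    rw [hd, iter_deriv_const_mul, show ((a:ℝ)+1) = ((↑(a+1):ℝ)) by push_cast; ring, ih (a+1),
      show a+1+j = a+(j+1) by omega]
    funext x
    rw [poch_succ]
    push_cast
    ring

/-- the operator `L` of order `2α+4` has `R_n^{α,β}` as eigenfunction with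
eigenvalue `(n)_{α+2}(n+β)_{α+2}`. -/
theorem R_eigen (α β n : ℕ) (hn : 1 ≤ n) :
    let r : ℝ := poch ((α : ℝ) + (β : ℝ) + 2) n * poch ((α : ℝ) + 2) (n - 1) /
      (2 * (Nat.factorial n : ℝ) * poch ((β : ℝ) + 1) (n - 1))
    let R : ℝ → ℝ := fun x => r * (x - 1) * jacobiP (n - 1) ((α : ℝ) + 2) (β : ℝ) x
    ∀ x ∈ Set.Ioo (-1 : ℝ) 1,
      ((x - 1) / (x + 1) ^ β) *
        deriv^[α + 2] (fun t => (t + 1) ^ (α + β + 2) *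
          deriv^[α + 2] (fun s => (s - 1) ^ (α + 1) * R s) t) x
      = poch (n : ℝ) (α + 2) * poch ((n : ℝ) + (β : ℝ)) (α + 2) * R x := by
  intro r R x hx
  have hR : ∀ s, R s = r * (s - 1) * jacobiP (n - 1) ((α : ℝ) + 2) (β : ℝ) s := fun s => rfl
  set m := n - 1 with hm
  have hmn : m + 1 = n := Nat.sub_add_cancel hn
  have hinner : (fun s => (s - 1) ^ (α + 1) * R s)
      = fun s => r * ((s-1)^(0+(α+2)) * jacobiP m (↑(0+(α+2))) (β:ℝ) s) := by
    funext s
    rw [hR s, show (0+(α+2)) = α+2 by omega,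
      show ((↑(α+2):ℝ)) = (α:ℝ)+2 by push_cast; ring]
    ring
  rw [hinner]
  have h1 : (fun t => (t + 1) ^ (α + β + 2) *
        deriv^[α + 2] (fun s => r * ((s-1)^(0+(α+2)) * jacobiP m (↑(0+(α+2))) (β:ℝ) s)) t)
      = fun t => (r * poch ((m:ℝ)+(↑(0:ℕ):ℝ)+1) (α+2)) *
          ((t+1)^(β+(α+2)) * jacobiP m ((↑(0:ℕ)):ℝ) (↑(β+(α+2))) t) := by
    funext t
    rw [iter_deriv_const_mul, iterA m 0 (α+2) β]
    rw [show α+β+2 = β+(α+2) by omega]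
    simp only [pow_zero, one_mul]
    ring
  rw [h1, iter_deriv_const_mul, iterB m β (α+2) 0]
  have hc1 : ((m:ℝ)+(↑(0:ℕ):ℝ)+1) = (n:ℝ) := by
    rw [← hmn]; push_cast; ring
  have hc2 : ((m:ℝ)+(β:ℝ)+1) = (n:ℝ)+(β:ℝ) := by
    rw [← hmn]; push_cast; ring
  rw [hc1, hc2, hR x, show ((↑(0+(α+2)):ℝ)) = (α:ℝ)+2 by push_cast; ring]
  have hxb : ((x:ℝ)+1)^β ≠ 0 := by
    have : (0:ℝ) < x + 1 := by linarith [hx.1]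
    positivity
  field_simp
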